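/- Let I ⊆ ℝ be an interval and f: I → ℝ a continuous function. Suppose I is subdivided into finitely many consecutive subintervals [x_i, x_{i+1}], on each of which f coincides with a function of the form A·cosh x + B·sinh x, and suppose that at each interior breakpoint x_i the left derivative of f is greater than or equal to the right derivative. Then f is F(-1)-concave: for any [x', x''] ⊆ I, if g(x) = A cosh x + B sinh x satisfies g(x') = f(x') and g(x'') = f(x''), then f(x) ≥ g(x) for all x ∈ [x', x'']. -/
import Mathlib


open Real Set

private lemma cosh_sinh_add (P Q a t : ℝ) :
    P * Real.cosh (a + t) + Q * Real.sinh (a + t)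
      = (P * Real.cosh a + Q * Real.sinh a) * Real.cosh t
        + (P * Real.sinh a + Q * Real.cosh a) * Real.sinh t := by
  rw [Real.cosh_add, Real.sinh_add]; ring

private lemma cosh_sinh_sub (P Q a t : ℝ) :
    P * Real.cosh (a - t) + Q * Real.sinh (a - t)
      = (P * Real.cosh a + Q * Real.sinh a) * Real.cosh t
        - (P * Real.sinh a + Q * Real.cosh a) * Real.sinh t := by
  rw [Real.cosh_sub, Real.sinh_sub]; ring

set_option maxHeartbeats 1000000 in
/-- Let `f` be continuous on `[x₀, x_n]`, which is subdivided into finitely many consecutive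
subintervals `[x_i, x_{i+1}]`, on each of which `f` coincides with a function
`y ↦ A i cosh y + B i sinh y` (an element of `F(-1)`), and suppose at each interior
breakpoint `x_i` the left derivative of `f` is at least the right derivative (i.e.
`A (i-1) sinh (x i) + B (i-1) cosh (x i) ≥ A i sinh (x i) + B i cosh (x i)`).
Then `f` is `F(-1)`-concave: for any `[x', x''] ⊆ [x₀, x_n]`, if
`g(y) = C cosh y + D sinh y` satisfies `g x' = f x'` and `g x'' = f x''`, then `f ≥ g` on
`[x', x'']`. -/
theorem piecewise_F_neg_one_concave (n : ℕ) (hn : 0 < n) (x : ℕ → ℝ) (f : ℝ → ℝ) (A B : ℕ → ℝ)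
    (hx : ∀ i < n, x i < x (i + 1))
    (hf : ContinuousOn f (Set.Icc (x 0) (x n)))
    (hpiece : ∀ i < n, ∀ y ∈ Set.Icc (x i) (x (i + 1)),
      f y = A i * Real.cosh y + B i * Real.sinh y)
    (hkink : ∀ i, 1 ≤ i → i < n →
      A i * Real.sinh (x i) + B i * Real.cosh (x i) ≤
        A (i - 1) * Real.sinh (x i) + B (i - 1) * Real.cosh (x i)) :
    ∀ x' x'' : ℝ, x 0 ≤ x' → x' ≤ x'' → x'' ≤ x n →
      ∀ C D : ℝ, C * Real.cosh x' + D * Real.sinh x' = f x' →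
        C * Real.cosh x'' + D * Real.sinh x'' = f x'' →
        ∀ y ∈ Set.Icc x' x'', C * Real.cosh y + D * Real.sinh y ≤ f y := by
  -- monotonicity of the breakpoints
  have hmono : ∀ j, j ≤ n → ∀ i, i ≤ j → x i ≤ x j := by
    intro j
    induction j with
    | zero =>
      intro _ i hi
      have : i = 0 := Nat.le_zero.mp hi
      simp [this]
    | succ k ih =>
      intro hk i hi
      by_cases hik : i = k + 1
      · simp [hik]
      · have hik' : i ≤ k := by omega
        exact (ih (by omega) i hik').trans (le_of_lt (hx k (by omega)))
  intro x' x'' h0 h12 h2n C D hC1 hC2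
  -- the difference function
  set h : ℝ → ℝ := fun y => f y - (C * Real.cosh y + D * Real.sinh y) with hh
  have hsub : Set.Icc x' x'' ⊆ Set.Icc (x 0) (x n) := Set.Icc_subset_Icc h0 h2n
  have hcont : ContinuousOn h (Set.Icc x' x'') := by
    apply ContinuousOn.sub (hf.mono hsub)
    exact (by continuity : Continuous fun y => C * Real.cosh y + D * Real.sinh y).continuousOn
  have hne : (Set.Icc x' x'').Nonempty := Set.nonempty_Icc.mpr h12
  obtain ⟨y₀, hy₀mem, hy₀min⟩ := isCompact_Icc.exists_isMinOn hne hcont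
  -- it suffices to show the minimum value is nonnegative
  have hmain : 0 ≤ h y₀ := by
    by_contra hmneg
    push_neg at hmneg
    -- y₀ is not an endpoint
    have hx'0 : h x' = 0 := by simp [hh, hC1]
    have hx''0 : h x'' = 0 := by simp [hh, hC2]
    have hy₀l : x' < y₀ := by
      rcases lt_or_eq_of_le hy₀mem.1 with hlt | heq
      · exact hlt
      · rw [heq] at hx'0; linarith
    have hy₀r : y₀ < x'' := by
      rcases lt_or_eq_of_le hy₀mem.2 with hlt | heq
      · exact hlt
      · rw [← heq] at hx''0; linarith
    have hy₀0 : x 0 ≤ y₀ := le_trans h0 hy₀mem.1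
    have hy₀n : y₀ < x n := lt_of_lt_of_le hy₀r h2n
    -- find the piece to the right of y₀
    have hfindR : ∀ m, m ≤ n → y₀ < x m → ∃ i, i < m ∧ x i ≤ y₀ ∧ y₀ < x (i + 1) := by
      intro m
      induction m with
      | zero => intro _ hlt; exact absurd hlt (not_lt.mpr hy₀0)
      | succ k ih =>
        intro hk hlt
        by_cases hc : x k ≤ y₀
        · exact ⟨k, Nat.lt_succ_self k, hc, hlt⟩
        · obtain ⟨i, h1, h2, h3⟩ := ih (by omega) (lt_of_not_ge hc)
          exact ⟨i, h1.trans (Nat.lt_succ_self k), h2, h3⟩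
    -- find the piece to the left of y₀
    have hy₀0' : x 0 < y₀ := lt_of_le_of_lt h0 hy₀l
    have hfindL : ∀ m, m ≤ n → y₀ ≤ x m → ∃ j, j < m ∧ x j < y₀ ∧ y₀ ≤ x (j + 1) := by
      intro m
      induction m with
      | zero => intro _ hle; exact absurd hle (not_le.mpr hy₀0')
      | succ k ih =>
        intro hk hle
        by_cases hc : y₀ ≤ x k
        · obtain ⟨j, h1, h2, h3⟩ := ih (by omega) hc
          exact ⟨j, h1.trans (Nat.lt_succ_self k), h2, h3⟩
        · exact ⟨k, Nat.lt_succ_self k, lt_of_not_ge hc, hle⟩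
    obtain ⟨i, hiln, hxi, hxi1⟩ := hfindR n le_rfl hy₀n
    obtain ⟨j, hjln, hxj, hxj1⟩ := hfindL n le_rfl (le_of_lt hy₀n)
    -- the "right derivative" at y₀ is positive
    have hy₀i : y₀ ∈ Set.Icc (x i) (x (i + 1)) := ⟨hxi, le_of_lt hxi1⟩
    have hy₀val : h y₀ = (A i - C) * Real.cosh y₀ + (B i - D) * Real.sinh y₀ := by
      simp only [hh]; rw [hpiece i hiln y₀ hy₀i]; ring
    set R : ℝ := (A i - C) * Real.sinh y₀ + (B i - D) * Real.cosh y₀ with hR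
    have hRpos : 0 < R := by
      set t : ℝ := min (x (i + 1) - y₀) (x'' - y₀) with ht
      have htpos : 0 < t := lt_min (by linarith) (by linarith)
      have hy₁mem : y₀ + t ∈ Set.Icc x' x'' := by
        constructor
        · linarith [hy₀mem.1]
        · have := min_le_right (x (i + 1) - y₀) (x'' - y₀); linarith
      have hy₁i : y₀ + t ∈ Set.Icc (x i) (x (i + 1)) := by
        constructor
        · linarith [hy₀i.1]
        · have := min_le_left (x (i + 1) - y₀) (x'' - y₀); linarith
      have hy₁val : h (y₀ + t) = h y₀ * Real.cosh t + R * Real.sinh t := by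
        have : h (y₀ + t) = (A i - C) * Real.cosh (y₀ + t) + (B i - D) * Real.sinh (y₀ + t) := by
          simp only [hh]; rw [hpiece i hiln (y₀ + t) hy₁i]; ring
        rw [this, cosh_sinh_add, hy₀val, hR]
      have hminle : h y₀ ≤ h (y₀ + t) := hy₀min hy₁mem
      have hcosh : 1 < Real.cosh t := Real.one_lt_cosh.mpr (ne_of_gt htpos)
      have hsinh : 0 < Real.sinh t := Real.sinh_pos_iff.mpr htpos
      nlinarith [hy₁val, hminle]
    -- the "left derivative" at y₀ is negative
    have hy₀j : y₀ ∈ Set.Icc (x j) (x (j + 1)) := ⟨le_of_lt hxj, hxj1⟩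
    have hy₀valj : h y₀ = (A j - C) * Real.cosh y₀ + (B j - D) * Real.sinh y₀ := by
      simp only [hh]; rw [hpiece j hjln y₀ hy₀j]; ring
    set L : ℝ := (A j - C) * Real.sinh y₀ + (B j - D) * Real.cosh y₀ with hL
    have hLneg : L < 0 := by
      set t : ℝ := min (y₀ - x j) (y₀ - x') with ht
      have htpos : 0 < t := lt_min (by linarith) (by linarith)
      have hy₁mem : y₀ - t ∈ Set.Icc x' x'' := by
        constructor
        · have := min_le_right (y₀ - x j) (y₀ - x'); linarith
        · linarith [hy₀mem.2]
      have hy₁j : y₀ - t ∈ Set.Icc (x j) (x (j + 1)) := by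
        constructor
        · have := min_le_left (y₀ - x j) (y₀ - x'); linarith
        · linarith [hy₀j.2]
      have hy₁val : h (y₀ - t) = h y₀ * Real.cosh t - L * Real.sinh t := by
        have : h (y₀ - t) = (A j - C) * Real.cosh (y₀ - t) + (B j - D) * Real.sinh (y₀ - t) := by
          simp only [hh]; rw [hpiece j hjln (y₀ - t) hy₁j]; ring
        rw [this, cosh_sinh_sub, hy₀valj, hL]
      have hminle : h y₀ ≤ h (y₀ - t) := hy₀min hy₁mem
      have hcosh : 1 < Real.cosh t := Real.one_lt_cosh.mpr (ne_of_gt htpos)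
      have hsinh : 0 < Real.sinh t := Real.sinh_pos_iff.mpr htpos
      nlinarith [hy₁val, hminle]
    -- relate i and j
    have hji : j ≤ i := by
      by_contra hc
      push_neg at hc
      have : x (i + 1) ≤ x j := hmono j (le_of_lt hjln) (i + 1) (by omega)
      linarith
    rcases eq_or_lt_of_le hji with heq | hlt
    · -- same piece: L = R
      have hLR : L = R := by rw [hL, hR, heq]
      linarith
    · -- kink case: i = j + 1 and y₀ = x i
      have hxj1i : x (j + 1) ≤ x i := hmono i (le_of_lt hiln) (j + 1) (by omega)
      have heq1 : y₀ = x (j + 1) := le_antisymm hxj1 (by linarith)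
      have heq2 : x i = y₀ := le_antisymm hxi (by linarith)
      have hij : i = j + 1 := by
        by_contra hc
        have hj2i : x (j + 2) ≤ x i := hmono i (le_of_lt hiln) (j + 2) (by omega)
        have : x (j + 1) < x (j + 2) := hx (j + 1) (by omega)
        linarith
      have hk := hkink i (by omega) hiln
      have hij' : i - 1 = j := by omega
      rw [hij', heq2] at hk
      rw [hL] at hLneg
      rw [hR] at hRpos
      linarith
  -- conclude
  intro y hy
  have hle : h y₀ ≤ h y := hy₀min hy
  simp only [hh] at hmain hle
  linarith
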